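/- Let n ≥ 1, θ ∈ (0,1), and let F₃ : [0,∞) → [0,∞) be bounded and non-increasing. For a cube Q ⊂ ℝ^n define F̃₃(Q) := Σ_{k=0}^∞ 2^{−kθ} F₃(rd(2^k Q, 𝕀)). Then for every λ ≥ 1 and every cube Q ⊂ ℝ^n, F̃₃(Q) ≤ F̃₃(λQ) ≤ (2λ)^θ F̃₃(Q). -/

import Mathlib

open MeasureTheory Set
open scoped ENNReal NNReal

noncomputable section

abbrev Rn (n : ℕ) := Fin n → ℝ

/-- A (half-open, axis-parallel) cube in `ℝⁿ` (with the `ℓ^∞` metric),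
given by its lower-left corner and its (positive) sidelength. -/
structure Cube (n : ℕ) where
  corner : Fin n → ℝ
  len : ℝ
  len_pos : 0 < len

namespace Cube

/-- The underlying set `∏_i [aᵢ, aᵢ + ℓ)` of a cube. -/
def toSet {n : ℕ} (I : Cube n) : Set (Rn n) :=
  {x | ∀ i, I.corner i ≤ x i ∧ x i < I.corner i + I.len}

/-- The center of a cube. -/
def center {n : ℕ} (I : Cube n) : Rn n := fun i => I.corner i + I.len / 2

/-- `λI`: the cube with the same center and sidelength `λ ℓ(I)`. -/
def dilate {n : ℕ} (I : Cube n) (lam : ℝ) (hlam : 0 < lam) : Cube n :=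
  ⟨fun i => I.center i - lam * I.len / 2, lam * I.len, mul_pos hlam I.len_pos⟩

end Cube

/-- The unit cube `𝕀 = [-1/2, 1/2)^n`. -/
def unitCube (n : ℕ) : Cube n := ⟨fun _ => -(1 / 2 : ℝ), 1, one_pos⟩

/-- The distance `d(E, F) = inf {|x - y| : x ∈ E, y ∈ F}` between two sets. -/
def sDist {α : Type*} [PseudoMetricSpace α] (E F : Set α) : ℝ :=
  sInf ((fun q : α × α => dist q.1 q.2) '' (E ×ˢ F))

/-- The relative distance `rd(I, J) = d(I, J) / max{ℓ(I), ℓ(J)}` between two cubes. -/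
def relDist {n : ℕ} (I J : Cube n) : ℝ :=
  sDist I.toSet J.toSet / max I.len J.len

/-- `F̃₂(t) = Σ_{k=0}^∞ 2^{-kθ} F₂(2^{-k} t)`. -/
def Ft2 (θ : ℝ) (F₂ : ℝ → ℝ) (t : ℝ) : ℝ :=
  ∑' k : ℕ, (2 : ℝ) ^ (-(k : ℝ) * θ) * F₂ ((2 : ℝ) ^ (-(k : ℝ)) * t)

/-- `F̃₃(Q) = Σ_{k=0}^∞ 2^{-kθ} F₃(rd(2^k Q, 𝕀))`. -/
def Ft3 {n : ℕ} (θ : ℝ) (F₃ : ℝ → ℝ) (Q : Cube n) : ℝ :=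
  ∑' k : ℕ, (2 : ℝ) ^ (-(k : ℝ) * θ) *
    F₃ (relDist (Q.dilate ((2 : ℝ) ^ k) (by positivity)) (unitCube n))

section Aux

variable {n : ℕ}

lemma Cube.corner_mem_toSet (I : Cube n) : I.corner ∈ I.toSet :=
  fun _ => ⟨le_refl _, by linarith [I.len_pos]⟩

lemma Cube.toSet_nonempty (I : Cube n) : I.toSet.Nonempty := ⟨I.corner, I.corner_mem_toSet⟩

lemma sDist_nonneg' {E F : Set (Rn n)} : 0 ≤ sDist E F :=
  Real.sInf_nonneg (by rintro x ⟨q, _, rfl⟩; exact dist_nonneg)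

lemma sDist_anti {E E' F : Set (Rn n)} (h : E ⊆ E') (hE : E.Nonempty) (hF : F.Nonempty) :
    sDist E' F ≤ sDist E F := by
  apply csInf_le_csInf
  · exact ⟨0, by rintro x ⟨q, _, rfl⟩; exact dist_nonneg⟩
  · obtain ⟨x, hx⟩ := hE; obtain ⟨y, hy⟩ := hF
    exact ⟨dist x y, ⟨(x, y), ⟨hx, hy⟩, rfl⟩⟩
  · exact Set.image_mono (Set.prod_mono h subset_rfl)

lemma Cube.dilate_subset (Q : Cube n) {a b : ℝ} (ha : 0 < a) (hab : a ≤ b)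
    (hb : 0 < b) : (Q.dilate a ha).toSet ⊆ (Q.dilate b hb).toSet := by
  intro x hx i
  have h1 := (hx i).1
  have h2 := (hx i).2
  have hl := Q.len_pos
  simp only [Cube.dilate, Cube.center, Cube.toSet, Set.mem_setOf_eq] at *
  constructor
  · nlinarith
  · nlinarith

lemma Cube.dilate_dilate (Q : Cube n) {a b : ℝ} (ha : 0 < a) (hb : 0 < b) :
    (Q.dilate a ha).dilate b hb = Q.dilate (b * a) (mul_pos hb ha) := by
  simp only [Cube.dilate, Cube.center, Cube.mk.injEq]
  exact ⟨funext fun i => by ring, by ring⟩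

lemma relDist_nonneg (I J : Cube n) : 0 ≤ relDist I J :=
  div_nonneg sDist_nonneg' (le_max_of_le_left I.len_pos.le)

lemma relDist_unit_anti (Q : Cube n) {a b : ℝ} (ha : 0 < a) (hab : a ≤ b) (hb : 0 < b) :
    relDist (Q.dilate b hb) (unitCube n) ≤ relDist (Q.dilate a ha) (unitCube n) := by
  unfold relDist
  have hlen : (unitCube n).len = 1 := rfl
  have hla : (Q.dilate a ha).len = a * Q.len := rfl
  have hlb : (Q.dilate b hb).len = b * Q.len := rfl
  rw [hlen, hla, hlb]
  apply div_le_div₀ sDist_nonneg'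
  · exact sDist_anti (Q.dilate_subset ha hab hb) (Cube.toSet_nonempty _) (Cube.toSet_nonempty _)
  · exact lt_max_of_lt_right one_pos
  · exact max_le_max (by nlinarith [Q.len_pos]) le_rfl

/-- The `k`-th term of `Ft3`. -/
def Ft3Term (θ : ℝ) (F₃ : ℝ → ℝ) (Q : Cube n) (k : ℕ) : ℝ :=
  (2 : ℝ) ^ (-(k : ℝ) * θ) *
    F₃ (relDist (Q.dilate ((2 : ℝ) ^ k) (by positivity)) (unitCube n))

lemma Ft3_eq_tsum (θ : ℝ) (F₃ : ℝ → ℝ) (Q : Cube n) :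
    Ft3 θ F₃ Q = ∑' k : ℕ, Ft3Term θ F₃ Q k := rfl

lemma Ft3Term_nonneg (θ : ℝ) (F₃ : ℝ → ℝ) (hF₃0 : ∀ t, 0 ≤ F₃ t) (Q : Cube n) (k : ℕ) :
    0 ≤ Ft3Term θ F₃ Q k :=
  mul_nonneg (by positivity) (hF₃0 _)

lemma Ft3Term_summable (θ : ℝ) (hθ0 : 0 < θ) (F₃ : ℝ → ℝ) (hF₃0 : ∀ t, 0 ≤ F₃ t)
    (hF₃m : AntitoneOn F₃ (Set.Ici 0)) (Q : Cube n) :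
    Summable (Ft3Term θ F₃ Q) := by
  have hgeom : Summable (fun k : ℕ => ((2 : ℝ) ^ (-θ)) ^ k * F₃ 0) := by
    apply Summable.mul_right
    apply summable_geometric_of_lt_one (by positivity)
    exact Real.rpow_lt_one_of_one_lt_of_neg one_lt_two (by linarith)
  apply Summable.of_nonneg_of_le (Ft3Term_nonneg θ F₃ hF₃0 Q) _ hgeom
  intro k
  have hexp : (2 : ℝ) ^ (-(k : ℝ) * θ) = ((2 : ℝ) ^ (-θ)) ^ k := by
    rw [show -(k : ℝ) * θ = -θ * (k : ℝ) by ring, Real.rpow_mul (by norm_num),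
      Real.rpow_natCast]
  rw [Ft3Term, hexp]
  apply mul_le_mul_of_nonneg_left _ (by positivity)
  exact hF₃m (Set.self_mem_Ici) (relDist_nonneg _ _) (relDist_nonneg _ _)

end Aux

/-- monotonicity and a doubling bound for `F̃₃` under dilations:
for `λ ≥ 1`, `F̃₃(Q) ≤ F̃₃(λQ) ≤ (2λ)^θ F̃₃(Q)`. -/
theorem Ft3_dilate_bounds
    (n : ℕ) (hn : 1 ≤ n) (θ : ℝ) (hθ0 : 0 < θ) (hθ1 : θ < 1)
    (F₃ : ℝ → ℝ) (hF₃0 : ∀ t, 0 ≤ F₃ t) (hF₃b : BddAbove (Set.range F₃))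
    (hF₃m : AntitoneOn F₃ (Set.Ici 0))
    (lam : ℝ) (hlam : 1 ≤ lam) (Q : Cube n) :
    Ft3 θ F₃ Q ≤ Ft3 θ F₃ (Q.dilate lam (lt_of_lt_of_le one_pos hlam)) ∧
      Ft3 θ F₃ (Q.dilate lam (lt_of_lt_of_le one_pos hlam)) ≤ (2 * lam) ^ θ * Ft3 θ F₃ Q := by
  have hlam0 : (0 : ℝ) < lam := lt_of_lt_of_le one_pos hlam
  set Q' : Cube n := Q.dilate lam hlam0 with hQ'
  have hsumQ : Summable (Ft3Term θ F₃ Q) := Ft3Term_summable θ hθ0 F₃ hF₃0 hF₃m Q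
  have hsumQ' : Summable (Ft3Term θ F₃ Q') := Ft3Term_summable θ hθ0 F₃ hF₃0 hF₃m Q'
  have hQ'dil : ∀ k : ℕ, Q'.dilate ((2 : ℝ) ^ k) (by positivity) =
      Q.dilate ((2 : ℝ) ^ k * lam) (by positivity) :=
    fun k => Q.dilate_dilate hlam0 (by positivity)
  -- first inequality
  have ineq1 : Ft3 θ F₃ Q ≤ Ft3 θ F₃ Q' := by
    rw [Ft3_eq_tsum, Ft3_eq_tsum]
    apply Summable.tsum_le_tsum _ hsumQ hsumQ'
    intro k
    unfold Ft3Term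
    rw [hQ'dil k]
    apply mul_le_mul_of_nonneg_left _ (by positivity)
    apply hF₃m (relDist_nonneg _ _) (relDist_nonneg _ _)
    exact relDist_unit_anti Q (by positivity)
      (le_mul_of_one_le_right (by positivity) hlam) _
  refine ⟨ineq1, ?_⟩
  -- choose m with lam ≤ 2^m ≤ 2*lam
  set m : ℕ := ⌈Real.logb 2 lam⌉₊ with hm
  have h1 : lam ≤ (2 : ℝ) ^ m := by
    calc lam = (2 : ℝ) ^ (Real.logb 2 lam) :=
          (Real.rpow_logb two_pos (by norm_num) hlam0).symm
      _ ≤ (2 : ℝ) ^ ((m : ℝ)) :=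
          Real.rpow_le_rpow_of_exponent_le one_le_two (Nat.le_ceil _)
      _ = (2 : ℝ) ^ m := Real.rpow_natCast 2 m
  have h2 : (2 : ℝ) ^ m ≤ 2 * lam := by
    have hlognn : 0 ≤ Real.logb 2 lam := Real.logb_nonneg one_lt_two hlam
    have hceil : (m : ℝ) < Real.logb 2 lam + 1 := Nat.ceil_lt_add_one hlognn
    calc (2 : ℝ) ^ m = (2 : ℝ) ^ ((m : ℝ)) := (Real.rpow_natCast 2 m).symm
      _ ≤ (2 : ℝ) ^ (Real.logb 2 lam + 1) :=
          Real.rpow_le_rpow_of_exponent_le one_le_two hceil.le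
      _ = 2 * lam := by
          rw [Real.rpow_add two_pos, Real.rpow_logb two_pos (by norm_num) hlam0,
            Real.rpow_one]; ring
  set B : ℝ := ((2 : ℝ) ^ m) ^ θ with hB
  have hBpos : 0 < B := by positivity
  have hB2 : B = (2 : ℝ) ^ ((m : ℝ) * θ) := by
    rw [hB, Real.rpow_mul (by norm_num), Real.rpow_natCast]
  have hBle : B ≤ (2 * lam) ^ θ :=
    Real.rpow_le_rpow (by positivity) h2 hθ0.le
  -- termwise comparison
  have key : ∀ k : ℕ, Ft3Term θ F₃ Q' k ≤ B * Ft3Term θ F₃ Q (k + m) := by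
    intro k
    have hexp : B * (2 : ℝ) ^ (-((k + m : ℕ) : ℝ) * θ) = (2 : ℝ) ^ (-(k : ℝ) * θ) := by
      rw [hB2, ← Real.rpow_add two_pos]
      congr 1
      push_cast
      ring
    have hle : relDist (Q.dilate ((2 : ℝ) ^ (k + m)) (by positivity)) (unitCube n) ≤
        relDist (Q.dilate ((2 : ℝ) ^ k * lam) (by positivity)) (unitCube n) := by
      apply relDist_unit_anti Q (by positivity) _ (by positivity)
      calc (2 : ℝ) ^ k * lam ≤ (2 : ℝ) ^ k * (2 : ℝ) ^ m :=
            mul_le_mul_of_nonneg_left h1 (by positivity)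
        _ = (2 : ℝ) ^ (k + m) := (pow_add 2 k m).symm
    calc Ft3Term θ F₃ Q' k
        = (2 : ℝ) ^ (-(k : ℝ) * θ) *
            F₃ (relDist (Q.dilate ((2 : ℝ) ^ k * lam) (by positivity)) (unitCube n)) := by
          rw [Ft3Term, hQ'dil k]
      _ ≤ (2 : ℝ) ^ (-(k : ℝ) * θ) *
            F₃ (relDist (Q.dilate ((2 : ℝ) ^ (k + m)) (by positivity)) (unitCube n)) := by
          apply mul_le_mul_of_nonneg_left _ (by positivity)
          exact hF₃m (relDist_nonneg _ _) (relDist_nonneg _ _) hle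
      _ = B * Ft3Term θ F₃ Q (k + m) := by
          rw [Ft3Term, ← mul_assoc, hexp]
  have hsumShift : Summable (fun k : ℕ => Ft3Term θ F₃ Q (k + m)) :=
    (summable_nat_add_iff m).mpr hsumQ
  have step1 : Ft3 θ F₃ Q' ≤ ∑' k : ℕ, B * Ft3Term θ F₃ Q (k + m) := by
    rw [Ft3_eq_tsum]
    exact Summable.tsum_le_tsum key hsumQ' (hsumShift.mul_left B)
  have step2 : (∑' k : ℕ, B * Ft3Term θ F₃ Q (k + m)) = B * ∑' k : ℕ, Ft3Term θ F₃ Q (k + m) :=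
    tsum_mul_left
  have step3 : (∑' k : ℕ, Ft3Term θ F₃ Q (k + m)) ≤ Ft3 θ F₃ Q := by
    rw [Ft3_eq_tsum]
    apply Summable.tsum_le_tsum_of_inj (fun k : ℕ => k + m)
      (add_left_injective m) (fun c _ => Ft3Term_nonneg θ F₃ hF₃0 Q c)
      (fun k => le_rfl) hsumShift hsumQ
  have hFt3nn : 0 ≤ Ft3 θ F₃ Q := by
    rw [Ft3_eq_tsum]
    exact tsum_nonneg (Ft3Term_nonneg θ F₃ hF₃0 Q)
  calc Ft3 θ F₃ Q' ≤ B * ∑' k : ℕ, Ft3Term θ F₃ Q (k + m) := by rw [← step2]; exact step1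
    _ ≤ B * Ft3 θ F₃ Q := mul_le_mul_of_nonneg_left step3 hBpos.le
    _ ≤ (2 * lam) ^ θ * Ft3 θ F₃ Q := mul_le_mul_of_nonneg_right hBle hFt3nn
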